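/- Let Γ be a countable group with a proper left-invariant distance and let μ be a symmetric probability measure on Γ whose support is contained in the closed ball {g : |g| ≤ 1}. Let P be the Markov operator on ℓ²(Γ), (Pf)(x) = Σ_g μ(g)·f(xg), with operator norm ‖P‖. Then for every integer n ≥ 1 and every g ∈ Γ with |g| ≤ n, μ^{*n}(g) ≤ 2·‖P‖^n·exp(−(n/2)·A(|g|/n)), where A(x) = (1+x)·log(1+x) + (1−x)·log(1−x). -/

import Mathlib

open Polynomial Polynomial.Chebyshev RealInnerProductSpace Finset

section ChebyshevLemmas
variable (R : Type*) [CommRing R]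


theorem myT_mul_U (m k : ℤ) : 2 * T R m * U R k = U R (m + k) + U R (k - m) := by
  induction m using Polynomial.Chebyshev.induct with
  | zero => simp [two_mul]
  | one =>
    have h := U_add_one R k
    simp only [T_one]
    linear_combination (norm := ring_nf) -h
  | add_two m ih1 ih2 =>
    have h₁ := U_add_two R (m + k)
    have h₂ := U_sub_two R (k - m)
    have h₃ := T_add_two R m
    linear_combination (norm := ring_nf) 2 * U R k * h₃ - h₁ - h₂ + 2 * (X : R[X]) * ih1 - ih2
  | neg_add_one m ih1 ih2 =>
    have h₁ := U_add_two R (-m - 1 + k)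
    have h₂ := U_sub_two R (k - (-m - 1))
    have h₃ := T_add_two R (-m - 1)
    linear_combination (norm := ring_nf) 2 * U R k * h₃ - h₁ - h₂ + 2 * (X : R[X]) * ih1 - ih2

theorem myUU (m k : ℤ) :
    2 * ((1 - X ^ 2) * (U R m * U R k)) = T R (m - k) - T R (m + k + 2) := by
  have h₁ := one_sub_X_sq_mul_U_eq_pol_in_T R m
  have h₂ := myT_mul_U R (m + 1) k
  have h₃ := myT_mul_U R (m + 2) k
  have h₄ := T_eq_U_sub_X_mul_U R (m - k)
  have h₅ := T_eq_U_sub_X_mul_U R (m + k + 2)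
  have h₆ : U R (k - m - 2) = -U R (m - k) := by
    have := U_neg_sub_two R (m - k); rw [← this]; ring_nf
  have h₇ : U R (k - m - 1) = -U R (m - k - 1) := by
    have := U_neg_sub_two R (m - k - 1); rw [← this]; ring_nf
  linear_combination (norm := ring_nf) 2 * U R k * h₁ + (X : R[X]) * h₂ - h₃ +
    (X : R[X]) * h₇ - h₆ - h₄ + h₅

theorem myTsq2 (m : ℤ) : 2 * T R m ^ 2 = 2 - 2 * ((1 - X ^ 2) * U R (m - 1) ^ 2) := by
  have h₁ := Polynomial.Chebyshev.T_mul_T R m m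
  have h₂ := myUU R (m - 1) (m - 1)
  have h3 : T R ((m:ℤ) - m) = 1 := by norm_num
  have h4 : T R ((m - 1 : ℤ) - (m - 1)) = 1 := by norm_num
  have h5 : ((m - 1 : ℤ)) + (m - 1) + 2 = m + m := by ring
  rw [h5, h4] at h₂
  rw [h3] at h₁
  linear_combination (norm := ring_nf) h₁ + h₂

theorem myTsq (m : ℤ) : (T ℝ m) ^ 2 = 1 - (1 - X ^ 2) * U ℝ (m - 1) ^ 2 := by
  have h := myTsq2 ℝ m
  have h2 : (2 : ℝ[X]) ≠ 0 := two_ne_zero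
  apply mul_left_cancel₀ h2
  linear_combination h


end ChebyshevLemmas


theorem T_natDegree_le : ∀ k : ℕ, (T ℝ (k:ℤ)).natDegree ≤ k := by
  intro k
  induction k using Nat.strong_induction_on with
  | _ k ih =>
    match k with
    | 0 => simp [T_zero]
    | 1 => simp [T_one]
    | (k+2) =>
      rw [show ((k+2 : ℕ) : ℤ) = (k:ℤ) + 2 by push_cast; ring, T_add_two]
      refine le_trans (natDegree_sub_le _ _) ?_
      have h1 : (2 * X * T ℝ (k+1)).natDegree ≤ k + 2 := by
        refine le_trans (natDegree_mul_le) ?_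
        have : (2 * X : ℝ[X]).natDegree ≤ 1 := by
          refine le_trans (natDegree_mul_le) ?_
          simp
        have h2 := ih (k+1) (by omega)
        rw [show ((k+1 : ℕ) : ℤ) = (k:ℤ) + 1 by push_cast; ring] at h2
        omega
      have h2 := ih k (by omega)
      simp only [max_le_iff]
      exact ⟨h1, by omega⟩

theorem xpow_expand (n : ℕ) : (X : ℝ[X])^n =
    ∑ j ∈ range (n+1), C ((n.choose j : ℝ)/2^n) * T ℝ ((n:ℤ) - 2*j) := by
  induction n with
  | zero => simp
  | succ n IH =>
    have key : ∀ m : ℤ, (X:ℝ[X]) * T ℝ m = C (1/2 : ℝ) * (T ℝ (m+1) + T ℝ (m-1)) := by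
      intro m
      have h := T_add_one ℝ m
      have h2 : C (1/2 : ℝ) * 2 = 1 := by
        rw [show (2:ℝ[X]) = Polynomial.C 2 from (map_ofNat Polynomial.C 2).symm, ← Polynomial.C_mul]; norm_num
      rw [h]
      linear_combination (norm := ring) (-(X * T ℝ m)) * h2
    simp only [show ((n+1:ℕ):ℤ) = (n:ℤ)+1 from by push_cast; ring,
      show n+1+1 = n+2 from by omega]
    have step : (X:ℝ[X])^(n+1) =
        (∑ j ∈ range (n+1), C ((n.choose j : ℝ)/2^(n+1)) * T ℝ ((n:ℤ) + 1 - 2*j)) +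
        (∑ j ∈ range (n+1), C ((n.choose j : ℝ)/2^(n+1)) * T ℝ ((n:ℤ) - 1 - 2*j)) := by
      rw [pow_succ, mul_comm, IH, Finset.mul_sum, ← Finset.sum_add_distrib]
      refine Finset.sum_congr rfl (fun j _ => ?_)
      rw [show (X:ℝ[X]) * (C ((n.choose j : ℝ)/2^n) * T ℝ ((n:ℤ) - 2*j))
          = C ((n.choose j : ℝ)/2^n) * (X * T ℝ ((n:ℤ) - 2*j)) by ring, key]
      rw [show ((n:ℤ) - 2*j) + 1 = (n:ℤ) + 1 - 2*j by ring,
          show ((n:ℤ) - 2*j) - 1 = (n:ℤ) - 1 - 2*j by ring]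
      have hC : C ((n.choose j : ℝ)/2^n) * C (1/2 : ℝ) = C ((n.choose j : ℝ)/2^(n+1)) := by
        rw [← Polynomial.C_mul]; congr 1; ring
      linear_combination (norm := ring)
        (T ℝ ((n:ℤ) + 1 - 2*j) + T ℝ ((n:ℤ) - 1 - 2*j)) * hC
    rw [step]
    have hA : (∑ j ∈ range (n+2), C ((n.choose j : ℝ)/2^(n+1)) * T ℝ ((n:ℤ) + 1 - 2*j)) =
        ∑ j ∈ range (n+1), C ((n.choose j : ℝ)/2^(n+1)) * T ℝ ((n:ℤ) + 1 - 2*j) := by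
      rw [show n+2 = (n+1)+1 from by omega, Finset.sum_range_succ]
      simp [Nat.choose_succ_self]
    rw [← hA]
    rw [Finset.sum_range_succ' (fun j => C (((n+1).choose j : ℝ)/2^(n+1)) * T ℝ ((n:ℤ)+1 - 2*j)) (n+1),
        Finset.sum_range_succ' (fun j => C ((n.choose j : ℝ)/2^(n+1)) * T ℝ ((n:ℤ) + 1 - 2*j)) (n+1)]
    rw [add_right_comm, ← Finset.sum_add_distrib]
    congr 1
    · refine Finset.sum_congr rfl (fun i _ => ?_)
      have hp : (((n+1).choose (i+1) : ℝ)) = (n.choose (i+1) : ℝ) + (n.choose i : ℝ) := by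
        rw [Nat.choose_succ_succ]; push_cast; ring
      have harg : ((n:ℤ)+1 - 2*((i+1:ℕ):ℤ)) = (n:ℤ) - 1 - 2*(i:ℤ) := by push_cast; ring
      rw [harg, hp]
      rw [show ((n.choose (i+1) : ℝ) + (n.choose i : ℝ))/2^(n+1)
          = (n.choose (i+1) : ℝ)/2^(n+1) + (n.choose i : ℝ)/2^(n+1) by ring, C_add]
      ring
    · norm_num


section OperatorLemmas
variable {E : Type*} [NormedAddCommGroup E] [InnerProductSpace ℝ E]
  (A : E →L[ℝ] E)

theorem sa_pow (hSA : ∀ f h : E, ⟪A f, h⟫ = ⟪f, A h⟫) (m : ℕ) (f h : E) : ⟪(A^m) f, h⟫ = ⟪f, (A^m) h⟫ := by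
  induction m generalizing f h with
  | zero => simp
  | succ m ih =>
    have l : (A^(m+1)) f = (A^m) (A f) := by rw [pow_succ]; rfl
    have r : (A^(m+1)) h = A ((A^m) h) := by rw [pow_succ']; rfl
    rw [l, r, ih, hSA]

theorem sa_aeval (hSA : ∀ f h : E, ⟪A f, h⟫ = ⟪f, A h⟫) (p : ℝ[X]) (f h : E) :
    ⟪(aeval A p) f, h⟫ = ⟪f, (aeval A p) h⟫ := by
  induction p using Polynomial.induction_on' with
  | add p q hp hq => simp [map_add, ContinuousLinearMap.add_apply, inner_add_left,
      inner_add_right, hp, hq]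
  | monomial m c =>
    have hm : aeval A (monomial m c) = c • A^m := by
      rw [aeval_monomial, ← Algebra.smul_def]
    rw [hm]
    simp only [ContinuousLinearMap.smul_apply, real_inner_smul_left, real_inner_smul_right,
      sa_pow A hSA]

theorem cheb_norm (hSA : ∀ f h : E, ⟪A f, h⟫ = ⟪f, A h⟫) (hA : ‖A‖ ≤ 1) (m : ℤ) (f : E) :
    ‖(aeval A (T ℝ m)) f‖ ≤ ‖f‖ := by
  set B := aeval A (T ℝ m) with hB
  set C := aeval A (U ℝ (m - 1)) with hC
  have saB : ∀ x y : E, ⟪B x, y⟫ = ⟪x, B y⟫ := fun x y => sa_aeval A hSA _ x y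
  have saC : ∀ x y : E, ⟪C x, y⟫ = ⟪x, C y⟫ := fun x y => sa_aeval A hSA _ x y
  have hAC : A * C = C * A := by
    have h := congrArg (aeval A) (mul_comm X (U ℝ (m-1)))
    simpa [map_mul] using h
  have e1 : A * A * C = C * (A * A) := by
    rw [mul_assoc, hAC, ← mul_assoc, hAC, mul_assoc]
  have e3 : A * A * (C * C) = C * (A * A * C) := by
    calc A * A * (C * C) = (A * A * C) * C := (mul_assoc _ _ _).symm
    _ = (C * (A * A)) * C := by rw [e1]
    _ = C * ((A * A) * C) := mul_assoc _ _ _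
  have e2 : (1 - A * A) * (C * C) = C * ((1 - A * A) * C) := by
    rw [sub_mul, one_mul, sub_mul, one_mul, mul_sub, e3]
  have hBsq : B * B = 1 - C * ((1 - A * A) * C) := by
    have h := congrArg (aeval A) (myTsq m)
    simp only [map_sub, map_mul, map_one, map_pow, aeval_X, sq] at h
    rw [← hB, ← hC] at h
    rw [h, e2]
  have key : ‖B f‖^2 = ‖f‖^2 - (‖C f‖^2 - ‖A (C f)‖^2) := by
    have h1 : ⟪f, (B * B) f⟫ = ‖B f‖^2 := by
      rw [ContinuousLinearMap.mul_apply, ← saB, real_inner_self_eq_norm_sq]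
    rw [← h1, hBsq]
    have h2 : ⟪f, (1 - C * ((1 - A * A) * C)) f⟫
        = ⟪f, f⟫ - ⟪f, C (((1 - A * A) * C) f)⟫ := by
      simp [ContinuousLinearMap.sub_apply, inner_sub_right, ContinuousLinearMap.mul_apply]
    rw [h2, ← saC, real_inner_self_eq_norm_sq]
    have h3 : ⟪C f, ((1 - A * A) * C) f⟫ = ‖C f‖^2 - ‖A (C f)‖^2 := by
      simp only [ContinuousLinearMap.mul_apply, ContinuousLinearMap.sub_apply,
        ContinuousLinearMap.one_apply, inner_sub_right]
      rw [real_inner_self_eq_norm_sq]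
      have h5 : ⟪C f, A (A (C f))⟫ = ‖A (C f)‖^2 := by
        rw [← hSA, real_inner_self_eq_norm_sq]
      rw [h5]
    rw [h3]
  have hACf : ‖A (C f)‖ ≤ ‖C f‖ := by
    calc ‖A (C f)‖ ≤ ‖A‖ * ‖C f‖ := A.le_opNorm _
    _ ≤ 1 * ‖C f‖ := by gcongr
    _ = ‖C f‖ := one_mul _
  have h4 : ‖B f‖^2 ≤ ‖f‖^2 := by nlinarith [norm_nonneg (C f), norm_nonneg (A (C f))]
  exact (pow_le_pow_iff_left₀ (norm_nonneg _) (norm_nonneg _) two_ne_zero).mp h4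

end OperatorLemmas


theorem chernoff (n : ℕ) (hn : 1 ≤ n) (d : ℝ) (hd0 : 0 ≤ d) (hdn : d ≤ n) :
    ∑ j ∈ (Finset.range (n+1)).filter (fun j : ℕ => d ≤ |(n:ℝ) - 2*(j:ℝ)|), (n.choose j : ℝ)/2^n
      ≤ 2 * Real.exp (-((n:ℝ)/2) * ((1 + d/n) * Real.log (1 + d/n) +
        (1 - d/n) * Real.log (1 - d/n))) := by
  have hnR : (0:ℝ) < n := by exact_mod_cast hn
  by_cases hd : d = n
  · -- boundary case d = n
    subst hd
    have hsub : (Finset.range (n+1)).filter (fun j : ℕ => (n:ℝ) ≤ |(n:ℝ) - 2*(j:ℝ)|) ⊆ {0, n} := by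
      intro j hj
      simp only [Finset.mem_filter, Finset.mem_range] at hj
      obtain ⟨hj1, hj2⟩ := hj
      simp only [Finset.mem_insert, Finset.mem_singleton]
      by_contra hcon
      push_neg at hcon
      have h1 : 1 ≤ j := by omega
      have h2 : j ≤ n - 1 := by omega
      have hc1 : (1:ℝ) ≤ (j:ℝ) := by exact_mod_cast h1
      have hc2 : (j:ℝ) ≤ (n:ℝ) - 1 := by
        have := (Nat.cast_le (α := ℝ)).mpr h2
        rwa [Nat.cast_sub hn, Nat.cast_one] at this
      have hb : |(n:ℝ) - 2*(j:ℝ)| < n := by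
        rw [abs_lt]; constructor <;> linarith
      linarith
    have hsum : ∑ j ∈ (Finset.range (n+1)).filter (fun j : ℕ => (n:ℝ) ≤ |(n:ℝ) - 2*(j:ℝ)|),
        (n.choose j : ℝ)/2^n ≤ 2/2^n := by
      refine le_trans (Finset.sum_le_sum_of_subset_of_nonneg hsub ?_) ?_
      · intro i _ _; positivity
      · rw [Finset.sum_insert (by simp; omega), Finset.sum_singleton]
        simp [Nat.choose_self, Nat.choose_zero_right]
        ring_nf
        exact le_refl _
    refine le_trans hsum (le_of_eq ?_)
    have hx : (n:ℝ)/n = 1 := div_self (ne_of_gt hnR)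
    rw [hx]
    have hlog : (1 + 1 : ℝ) * Real.log (1+1) + (1 - 1:ℝ) * Real.log (1-1) = 2 * Real.log 2 := by
      norm_num
    rw [hlog]
    rw [show -((n:ℝ)/2) * (2 * Real.log 2) = Real.log 2 * (-(n:ℝ)) by ring,
      ← Real.rpow_def_of_pos (by norm_num : (0:ℝ) < 2),
      Real.rpow_neg (by norm_num : (0:ℝ) ≤ 2), Real.rpow_natCast]
    rw [div_eq_mul_inv]
  · -- main case d < n
    have hdn' : d < n := lt_of_le_of_ne hdn hd
    set x := d/n with hxdef
    have hx0 : 0 ≤ x := by positivity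
    have hx1 : x < 1 := by rw [hxdef, div_lt_one hnR]; exact hdn'
    have hdx : d = n * x := by rw [hxdef]; field_simp [hnR.ne']
    set a := 1 + x with hadef
    set b := 1 - x with hbdef
    have ha : 0 < a := by simp [hadef]; linarith
    have hb : 0 < b := by simp [hbdef]; linarith
    have hab2 : a + b = 2 := by simp [hadef, hbdef]; ring
    set s := Real.sqrt (a/b) with hsdef
    have hs1 : 1 ≤ s := by
      rw [hsdef]
      refine Real.one_le_sqrt.mpr ?_
      · rw [le_div_iff₀ hb]; simp [hadef, hbdef]; linarith
    have hs0 : 0 < s := lt_of_lt_of_le one_pos hs1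
    -- half sums
    have key1 : ∀ j ∈ Finset.range (n+1), d ≤ (n:ℝ) - 2*j →
        (n.choose j : ℝ) ≤ s^(-d) * ((s⁻¹)^j * s^(n-j) * (n.choose j : ℝ)) := by
      intro j hj hdj
      rw [Finset.mem_range] at hj
      have hjn : j ≤ n := by omega
      have hexp : s^(-d) * ((s⁻¹)^j * s^(n-j)) = s^((n:ℝ) - 2*j - d) := by
        rw [← Real.rpow_natCast s (n-j), ← Real.rpow_natCast s⁻¹ j,
          ← Real.rpow_neg_one s, ← Real.rpow_mul (le_of_lt hs0),
          ← Real.rpow_add hs0, ← Real.rpow_add hs0]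
        congr 1
        have : ((n - j : ℕ) : ℝ) = (n:ℝ) - j := by
          push_cast [Nat.cast_sub hjn]; ring
        rw [this]; ring
      have hge1 : (1:ℝ) ≤ s^((n:ℝ) - 2*j - d) := by
        rw [← Real.rpow_zero s]
        exact Real.rpow_le_rpow_of_exponent_le hs1 (by linarith)
      calc (n.choose j : ℝ) = 1 * (n.choose j : ℝ) := (one_mul _).symm
      _ ≤ s^((n:ℝ) - 2*j - d) * (n.choose j : ℝ) := by
          exact mul_le_mul_of_nonneg_right hge1 (by positivity)
      _ = s^(-d) * ((s⁻¹)^j * s^(n-j) * (n.choose j : ℝ)) := by rw [← hexp]; ring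
    have key2 : ∀ j ∈ Finset.range (n+1), d ≤ 2*j - (n:ℝ) →
        (n.choose j : ℝ) ≤ s^(-d) * (s^j * (s⁻¹)^(n-j) * (n.choose j : ℝ)) := by
      intro j hj hdj
      rw [Finset.mem_range] at hj
      have hjn : j ≤ n := by omega
      have hexp : s^(-d) * (s^j * (s⁻¹)^(n-j)) = s^(2*(j:ℝ) - n - d) := by
        rw [← Real.rpow_natCast s j, ← Real.rpow_natCast s⁻¹ (n-j),
          ← Real.rpow_neg_one s, ← Real.rpow_mul (le_of_lt hs0),
          ← Real.rpow_add hs0, ← Real.rpow_add hs0]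
        congr 1
        have : ((n - j : ℕ) : ℝ) = (n:ℝ) - j := by
          push_cast [Nat.cast_sub hjn]; ring
        rw [this]; ring
      have hge1 : (1:ℝ) ≤ s^(2*(j:ℝ) - n - d) := by
        rw [← Real.rpow_zero s]
        exact Real.rpow_le_rpow_of_exponent_le hs1 (by linarith)
      calc (n.choose j : ℝ) = 1 * (n.choose j : ℝ) := (one_mul _).symm
      _ ≤ s^(2*(j:ℝ) - n - d) * (n.choose j : ℝ) := by
          exact mul_le_mul_of_nonneg_right hge1 (by positivity)
      _ = s^(-d) * (s^j * (s⁻¹)^(n-j) * (n.choose j : ℝ)) := by rw [← hexp]; ring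
    have hbinom1 : ∑ j ∈ Finset.range (n+1), (s⁻¹)^j * s^(n-j) * (n.choose j : ℝ)
        = (s⁻¹ + s)^n := by rw [add_pow]
    have hbinom2 : ∑ j ∈ Finset.range (n+1), s^j * (s⁻¹)^(n-j) * (n.choose j : ℝ)
        = (s + s⁻¹)^n := by rw [add_pow]
    have hL1 : ∑ j ∈ (Finset.range (n+1)).filter (fun j : ℕ => d ≤ (n:ℝ) - 2*(j:ℝ)),
        (n.choose j : ℝ) ≤ s^(-d) * (s⁻¹ + s)^n := by
      calc ∑ j ∈ (Finset.range (n+1)).filter (fun j : ℕ => d ≤ (n:ℝ) - 2*(j:ℝ)),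
            (n.choose j : ℝ)
          ≤ ∑ j ∈ (Finset.range (n+1)).filter (fun j : ℕ => d ≤ (n:ℝ) - 2*(j:ℝ)),
            s^(-d) * ((s⁻¹)^j * s^(n-j) * (n.choose j : ℝ)) := by
            refine Finset.sum_le_sum (fun j hj => ?_)
            have hj' := Finset.mem_filter.mp hj
            exact key1 j hj'.1 hj'.2
        _ ≤ ∑ j ∈ Finset.range (n+1), s^(-d) * ((s⁻¹)^j * s^(n-j) * (n.choose j : ℝ)) := by
            refine Finset.sum_le_sum_of_subset_of_nonneg (Finset.filter_subset _ _) ?_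
            intro i _ _; positivity
        _ = s^(-d) * ∑ j ∈ Finset.range (n+1), (s⁻¹)^j * s^(n-j) * (n.choose j : ℝ) := by
            rw [← Finset.mul_sum]
        _ = s^(-d) * (s⁻¹ + s)^n := by rw [hbinom1]
    have hL2 : ∑ j ∈ (Finset.range (n+1)).filter (fun j : ℕ => d ≤ 2*(j:ℝ) - (n:ℝ)),
        (n.choose j : ℝ) ≤ s^(-d) * (s⁻¹ + s)^n := by
      calc ∑ j ∈ (Finset.range (n+1)).filter (fun j : ℕ => d ≤ 2*(j:ℝ) - (n:ℝ)),
            (n.choose j : ℝ)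
          ≤ ∑ j ∈ (Finset.range (n+1)).filter (fun j : ℕ => d ≤ 2*(j:ℝ) - (n:ℝ)),
            s^(-d) * (s^j * (s⁻¹)^(n-j) * (n.choose j : ℝ)) := by
            refine Finset.sum_le_sum (fun j hj => ?_)
            have hj' := Finset.mem_filter.mp hj
            exact key2 j hj'.1 hj'.2
        _ ≤ ∑ j ∈ Finset.range (n+1), s^(-d) * (s^j * (s⁻¹)^(n-j) * (n.choose j : ℝ)) := by
            refine Finset.sum_le_sum_of_subset_of_nonneg (Finset.filter_subset _ _) ?_
            intro i _ _; positivity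
        _ = s^(-d) * ∑ j ∈ Finset.range (n+1), s^j * (s⁻¹)^(n-j) * (n.choose j : ℝ) := by
            rw [← Finset.mul_sum]
        _ = s^(-d) * (s + s⁻¹)^n := by rw [hbinom2]
        _ = s^(-d) * (s⁻¹ + s)^n := by rw [add_comm]
    have hsubF : (Finset.range (n+1)).filter (fun j : ℕ => d ≤ |(n:ℝ) - 2*(j:ℝ)|) ⊆
        (Finset.range (n+1)).filter (fun j : ℕ => d ≤ (n:ℝ) - 2*(j:ℝ)) ∪
        (Finset.range (n+1)).filter (fun j : ℕ => d ≤ 2*(j:ℝ) - (n:ℝ)) := by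
      intro j hj
      rw [Finset.mem_filter] at hj
      rw [Finset.mem_union, Finset.mem_filter, Finset.mem_filter]
      rcases le_abs.mp hj.2 with h | h
      · exact Or.inl ⟨hj.1, h⟩
      · exact Or.inr ⟨hj.1, by linarith⟩
    have hsplit : ∑ j ∈ (Finset.range (n+1)).filter (fun j : ℕ => d ≤ |(n:ℝ) - 2*(j:ℝ)|),
        (n.choose j : ℝ) ≤ 2 * (s^(-d) * (s⁻¹ + s)^n) := by
      have h1 : ∑ j ∈ (Finset.range (n+1)).filter (fun j : ℕ => d ≤ |(n:ℝ) - 2*(j:ℝ)|),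
          (n.choose j : ℝ) ≤
          ∑ j ∈ ((Finset.range (n+1)).filter (fun j : ℕ => d ≤ (n:ℝ) - 2*(j:ℝ)) ∪
          (Finset.range (n+1)).filter (fun j : ℕ => d ≤ 2*(j:ℝ) - (n:ℝ))), (n.choose j : ℝ) := by
        refine Finset.sum_le_sum_of_subset_of_nonneg hsubF ?_
        intro i _ _; positivity
      have h2 := Finset.sum_union_inter (s₁ := (Finset.range (n+1)).filter
          (fun j : ℕ => d ≤ (n:ℝ) - 2*(j:ℝ)))
          (s₂ := (Finset.range (n+1)).filter (fun j : ℕ => d ≤ 2*(j:ℝ) - (n:ℝ)))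
          (f := fun j => (n.choose j : ℝ))
      have h3 : (0:ℝ) ≤ ∑ j ∈ ((Finset.range (n+1)).filter (fun j : ℕ => d ≤ (n:ℝ) - 2*(j:ℝ)) ∩
          (Finset.range (n+1)).filter (fun j : ℕ => d ≤ 2*(j:ℝ) - (n:ℝ))), (n.choose j : ℝ) := by
        refine Finset.sum_nonneg (fun i _ => by positivity)
      linarith
    -- evaluation of the optimal bound
    have hsa : (0:ℝ) < Real.sqrt a := Real.sqrt_pos.mpr ha
    have hsb : (0:ℝ) < Real.sqrt b := Real.sqrt_pos.mpr hb
    have hs_eq : s = Real.sqrt a / Real.sqrt b := by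
      rw [hsdef, Real.sqrt_div (le_of_lt ha)]
    have hmid : (s⁻¹ + s)/2 = 1/(Real.sqrt a * Real.sqrt b) := by
      rw [hs_eq, inv_div, div_add_div _ _ (ne_of_gt hsa) (ne_of_gt hsb),
        Real.mul_self_sqrt (le_of_lt hb), Real.mul_self_sqrt (le_of_lt ha)]
      rw [show b + a = 2 by linarith]
      rw [div_div, div_eq_div_iff (by positivity) (by positivity)]
      ring
    have hmidpos : (0:ℝ) < 1/(Real.sqrt a * Real.sqrt b) := by positivity
    have heval : s^(-d) * ((s⁻¹ + s)/2)^n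
        = Real.exp (-((n:ℝ)/2) * (a * Real.log a + b * Real.log b)) := by
      rw [hmid, Real.rpow_def_of_pos hs0]
      have hln : Real.log (1/(Real.sqrt a * Real.sqrt b))
          = -(Real.log a / 2 + Real.log b / 2) := by
        rw [one_div, Real.log_inv, Real.log_mul (ne_of_gt hsa) (ne_of_gt hsb),
          Real.log_sqrt (le_of_lt ha), Real.log_sqrt (le_of_lt hb)]
      have hpow : (1/(Real.sqrt a * Real.sqrt b))^n
          = Real.exp ((n:ℝ) * -(Real.log a / 2 + Real.log b / 2)) := by
        rw [Real.exp_nat_mul, ← hln, Real.exp_log hmidpos]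
      rw [hpow, ← Real.exp_add]
      congr 1
      have hlogs : Real.log s = (Real.log a - Real.log b)/2 := by
        rw [hsdef, Real.log_sqrt (by positivity), Real.log_div (ne_of_gt ha) (ne_of_gt hb)]
      rw [hlogs, hadef, hbdef, hdx]
      ring
    -- final chain
    have hfinal : ∑ j ∈ (Finset.range (n+1)).filter (fun j : ℕ => d ≤ |(n:ℝ) - 2*(j:ℝ)|),
        (n.choose j : ℝ)/2^n ≤ 2 * (s^(-d) * ((s⁻¹ + s)/2)^n) := by
      rw [← Finset.sum_div]
      rw [div_le_iff₀ (by positivity : (0:ℝ) < 2^n)]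
      calc ∑ j ∈ (Finset.range (n+1)).filter (fun j : ℕ => d ≤ |(n:ℝ) - 2*(j:ℝ)|),
            (n.choose j : ℝ) ≤ 2 * (s^(-d) * (s⁻¹ + s)^n) := hsplit
        _ = 2 * (s^(-d) * ((s⁻¹ + s)/2)^n) * 2^n := by
            rw [div_pow]; field_simp
    rw [heval] at hfinal
    exact hfinal



set_option maxHeartbeats 2000000
set_option synthInstance.maxHeartbeats 400000

/-- **Carne–Varopoulos type bound.** For a symmetric probability measure
supported in the ball of radius `1`, `μ^{*n}(g) ≤ 2 ‖P‖ⁿ exp(-(n/2) A(|g|/n))` whenever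
`|g| ≤ n`, where `A(x) = (1+x) log (1+x) + (1-x) log (1-x)`. -/
theorem carne_varopoulos_bound
    {Γ : Type*} [Group Γ] [Countable Γ] [DecidableEq Γ] [MetricSpace Γ]
    (hinv : ∀ g x y : Γ, dist (g * x) (g * y) = dist x y)
    (hproper : ∀ r : ℝ, (Metric.closedBall (1 : Γ) r).Finite)
    (μ : Γ → ℝ) (hpos : ∀ g, 0 ≤ μ g) (hprob : HasSum μ 1)
    (hsymm : ∀ g : Γ, μ g⁻¹ = μ g)
    (hsupp : ∀ g : Γ, μ g ≠ 0 → dist g 1 ≤ 1)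
    (μn : ℕ → Γ → ℝ)
    (hμ0 : ∀ g : Γ, μn 0 g = if g = 1 then 1 else 0)
    (hμsucc : ∀ (n : ℕ) (g : Γ), μn (n + 1) g = ∑' h : Γ, μn n h * μ (h⁻¹ * g))
    (P : lp (fun _ : Γ => ℝ) 2 →L[ℝ] lp (fun _ : Γ => ℝ) 2)
    (hP : ∀ (f : lp (fun _ : Γ => ℝ) 2) (x : Γ), P f x = ∑' g : Γ, μ g * f (x * g))
    (n : ℕ) (hn : 1 ≤ n) (g : Γ) (hg : dist g 1 ≤ n) :
    μn n g ≤ 2 * ‖P‖ ^ n * Real.exp (-((n : ℝ) / 2) *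
      ((1 + dist g 1 / n) * Real.log (1 + dist g 1 / n) +
        (1 - dist g 1 / n) * Real.log (1 - dist g 1 / n))) := by
  set H := lp (fun _ : Γ => ℝ) 2 with hHdef
  set δ : Γ → H := fun x => lp.single 2 x (1:ℝ) with hδdef
  have hδapply : ∀ x y : Γ, (δ x : ∀ _ : Γ, ℝ) y = if y = x then 1 else 0 := by
    intro x y
    rw [hδdef]
    by_cases h : y = x
    · subst h; simp [lp.single_apply_self]
    · simp [lp.single_apply_ne 2 x _ h, h]
  have hδnorm : ∀ x : Γ, ‖δ x‖ = 1 := by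
    intro x
    have := lp.norm_single (p := 2) (E := fun _ : Γ => ℝ) (by norm_num) x (1:ℝ)
    exact this.trans norm_one
  have hδinner : ∀ (x : Γ) (v : H), ⟪δ x, v⟫ = (v : ∀ _ : Γ, ℝ) x := by
    intro x v
    rw [hδdef]
    have := lp.inner_single_left (𝕜 := ℝ) x (1:ℝ) v
    simpa using this
  -- evaluation of powers of P on δ 1
  have hPδ : ∀ (k : ℕ) (x : Γ), ((P^k) (δ 1) : ∀ _ : Γ, ℝ) x = μn k x := by
    intro k
    induction k with
    | zero =>
      intro x
      rw [pow_zero, ContinuousLinearMap.one_apply, hδapply, hμ0]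
    | succ k ih =>
      intro x
      have hs : (P^(k+1)) (δ 1) = P ((P^k) (δ 1)) := by rw [pow_succ']; rfl
      rw [hs, hP, hμsucc,
        ← (Equiv.mulLeft x).tsum_eq (fun h : Γ => μn k h * μ (h⁻¹ * x))]
      refine tsum_congr (fun b => ?_)
      simp only [Equiv.coe_mulLeft]
      rw [ih (x * b), show (x*b)⁻¹ * x = b⁻¹ by group, hsymm, mul_comm]
  -- support of μn
  have hsupport : ∀ (k : ℕ) (y : Γ), μn k y ≠ 0 → dist y 1 ≤ k := by
    intro k
    induction k with
    | zero =>
      intro y hy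
      rw [hμ0] at hy
      by_cases h : y = 1
      · subst h; simp
      · simp [h] at hy
    | succ k ih =>
      intro y hy
      rw [hμsucc] at hy
      have hex : ∃ h : Γ, μn k h * μ (h⁻¹ * y) ≠ 0 := by
        by_contra hall
        push_neg at hall
        have : (fun h : Γ => μn k h * μ (h⁻¹ * y)) = fun _ => 0 := funext hall
        rw [this] at hy
        exact hy tsum_zero
      obtain ⟨b, hb⟩ := hex
      have h1 : μn k b ≠ 0 := fun h => hb (by rw [h, zero_mul])
      have h2 : μ (b⁻¹ * y) ≠ 0 := fun h => hb (by rw [h, mul_zero])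
      have hd1 : dist y b ≤ 1 := by
        have := hinv b⁻¹ y b
        rw [inv_mul_cancel] at this
        rw [← this]
        exact hsupp _ h2
      have hd2 : dist b 1 ≤ k := ih b h1
      calc dist y 1 ≤ dist y b + dist b 1 := dist_triangle _ _ _
        _ ≤ 1 + k := by linarith
        _ = ((k+1 : ℕ) : ℝ) := by push_cast; ring
  -- P applied to single deltas
  have hPδval : ∀ a b : Γ, (P (δ a) : ∀ _ : Γ, ℝ) b = μ (b⁻¹ * a) := by
    intro a b
    rw [hP]
    rw [tsum_eq_single (b⁻¹ * a) ?_]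
    · rw [hδapply, if_pos (by group), mul_one]
    · intro c hc
      rw [hδapply, if_neg ?_, mul_zero]
      intro hbc
      exact hc (by rw [← hbc]; group)
  -- self-adjointness of P
  have hSAδ : ∀ (a : Γ) (v : H), ⟪P (δ a), v⟫ = ⟪δ a, P v⟫ := by
    intro a v
    rw [hδinner a (P v), hP]
    rw [lp.inner_eq_tsum]
    simp only [RCLike.inner_apply, RCLike.conj_to_real]
    rw [← (Equiv.mulLeft a).tsum_eq
      (fun b : Γ => (v : ∀ _ : Γ, ℝ) b * (P (δ a) : ∀ _ : Γ, ℝ) b)]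
    refine tsum_congr (fun b => ?_)
    simp only [Equiv.coe_mulLeft]
    rw [hPδval a (a * b), show (a*b)⁻¹ * a = b⁻¹ by group, hsymm]
    exact mul_comm _ _
  have hSA : ∀ f v : H, ⟪P f, v⟫ = ⟪f, P v⟫ := by
    intro f v
    have hsingle_smul : ∀ a : Γ, lp.single 2 a ((f : ∀ _ : Γ, ℝ) a)
        = (f : ∀ _ : Γ, ℝ) a • δ a := by
      intro a
      rw [hδdef, ← lp.single_smul]
      norm_num
    have hs := lp.hasSum_single (E := fun _ : Γ => ℝ) (p := 2) (by norm_num) f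
    have h1 := hs.mapL ((innerSL ℝ v).comp P)
    have h2 := hs.mapL (innerSL ℝ (P v))
    simp only [ContinuousLinearMap.comp_apply, innerSL_apply_apply] at h1 h2
    have hterm : ∀ a : Γ, ⟪v, P (lp.single 2 a ((f : ∀ _ : Γ, ℝ) a))⟫
        = ⟪P v, lp.single 2 a ((f : ∀ _ : Γ, ℝ) a)⟫ := by
      intro a
      rw [hsingle_smul a, map_smul, inner_smul_right, inner_smul_right]
      congr 1
      rw [real_inner_comm, hSAδ, real_inner_comm]
    simp only [hterm] at h1
    have huniq := HasSum.unique h1 h2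
    calc ⟪P f, v⟫ = ⟪v, P f⟫ := real_inner_comm _ _
      _ = ⟪P v, f⟫ := huniq
      _ = ⟪f, P v⟫ := real_inner_comm _ _
  -- norm of P is positive
  have hPn : 0 < ‖P‖ := by
    obtain ⟨a, ha⟩ : ∃ a : Γ, μ a ≠ 0 := by
      by_contra hall
      push_neg at hall
      have : HasSum μ 0 := by
        have : μ = fun _ => 0 := funext hall
        rw [this]
        exact hasSum_zero
      exact one_ne_zero (hprob.unique this)
    have hval : (P (δ 1) : ∀ _ : Γ, ℝ) a ≠ 0 := by
      rw [hPδval 1 a, mul_one, hsymm]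
      exact ha
    have hPne : P ≠ 0 := by
      intro h0
      rw [h0] at hval
      simp at hval
    exact norm_pos_iff.mpr hPne
  -- normalized operator
  set A : H →L[ℝ] H := ‖P‖⁻¹ • P with hAdef
  have hAnorm : ‖A‖ ≤ 1 := by
    rw [hAdef]
    refine le_trans (ContinuousLinearMap.opNorm_smul_le _ _) ?_
    rw [Real.norm_eq_abs, abs_of_pos (by positivity), inv_mul_cancel₀ (ne_of_gt hPn)]
  have hASA : ∀ f v : H, ⟪A f, v⟫ = ⟪f, A v⟫ := by
    intro f v
    rw [hAdef]
    simp only [ContinuousLinearMap.smul_apply, inner_smul_left, inner_smul_right,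
      RCLike.conj_to_real]
    rw [hSA]
  -- power evaluation for A
  have hAk : ∀ (k : ℕ) (x : Γ), ((A^k) (δ 1) : ∀ _ : Γ, ℝ) x = ‖P‖⁻¹^k * μn k x := by
    intro k x
    rw [hAdef, _root_.smul_pow ‖P‖⁻¹ P k]
    rw [ContinuousLinearMap.smul_apply]
    have : ((‖P‖⁻¹^k • (P^k) (δ 1) : H) : ∀ _ : Γ, ℝ) x = ‖P‖⁻¹^k * ((P^k) (δ 1) : ∀ _ : Γ, ℝ) x := by
      rw [lp.coeFn_smul]
      simp [smul_eq_mul]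
    rw [this, hPδ k x]
  -- expansion of A^n in Chebyshev polynomials
  have hAn : (A : H →L[ℝ] H)^n = ∑ j ∈ Finset.range (n+1),
      ((n.choose j : ℝ)/2^n) • (aeval A (T ℝ ((n:ℤ) - 2*(j:ℤ)))) := by
    have h1 : (A : H →L[ℝ] H)^n = aeval A ((X : ℝ[X])^n) := by
      rw [map_pow, aeval_X]
    rw [h1, xpow_expand, map_sum]
    refine Finset.sum_congr rfl (fun j _ => ?_)
    rw [map_mul, Polynomial.aeval_C, Algebra.smul_def]
  -- key inner products
  set t : ℕ → ℝ := fun j => ⟪δ g, (aeval A (T ℝ ((n:ℤ) - 2*(j:ℤ)))) (δ 1)⟫ with htdef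
  have hdecomp : μn n g = ‖P‖^n * ∑ j ∈ Finset.range (n+1), ((n.choose j : ℝ)/2^n) * t j := by
    have h1 : ((A^n) (δ 1) : ∀ _ : Γ, ℝ) g = ‖P‖⁻¹^n * μn n g := hAk n g
    have h2 : ⟪δ g, (A^n) (δ 1)⟫ = ((A^n) (δ 1) : ∀ _ : Γ, ℝ) g := hδinner g _
    have h3 : ⟪δ g, (A^n) (δ 1)⟫ = ∑ j ∈ Finset.range (n+1), ((n.choose j : ℝ)/2^n) * t j := by
      rw [hAn]
      rw [ContinuousLinearMap.sum_apply]
      rw [inner_sum]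
      refine Finset.sum_congr rfl (fun j _ => ?_)
      rw [ContinuousLinearMap.smul_apply, inner_smul_right]
    rw [h2, h1] at h3
    calc μn n g = ‖P‖^n * (‖P‖⁻¹^n * μn n g) := by
          rw [inv_pow, ← mul_assoc, mul_inv_cancel₀ (by positivity), one_mul]
      _ = ‖P‖^n * ∑ j ∈ Finset.range (n+1), ((n.choose j : ℝ)/2^n) * t j := by rw [h3]
  -- bound |t j| ≤ 1
  have htb : ∀ j : ℕ, |t j| ≤ 1 := by
    intro j
    rw [htdef]
    calc |⟪δ g, (aeval A (T ℝ ((n:ℤ) - 2*(j:ℤ)))) (δ 1)⟫|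
        ≤ ‖δ g‖ * ‖(aeval A (T ℝ ((n:ℤ) - 2*(j:ℤ)))) (δ 1)‖ := abs_real_inner_le_norm _ _
      _ ≤ ‖δ g‖ * ‖δ 1‖ := by
          refine mul_le_mul_of_nonneg_left ?_ (norm_nonneg _)
          exact cheb_norm A hASA hAnorm _ _
      _ = 1 := by rw [hδnorm, hδnorm, mul_one]
  -- vanishing of t j when the Chebyshev degree is too small
  have htv : ∀ j : ℕ, ¬ (dist g 1 ≤ |(n:ℝ) - 2*(j:ℝ)|) → t j = 0 := by
    intro j hj
    show ⟪δ g, (aeval A (T ℝ ((n:ℤ) - 2*(j:ℤ)))) (δ 1)⟫ = 0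
    set m : ℤ := (n:ℤ) - 2*(j:ℤ) with hmdef
    set K : ℕ := m.natAbs with hKdef
    have hKr : (K:ℝ) = |(n:ℝ) - 2*(j:ℝ)| := by
      rw [hKdef, Nat.cast_natAbs]
      congr 1
      push_cast [hmdef]
      ring
    have hKd : (K:ℝ) < dist g 1 := by
      rw [hKr]
      exact lt_of_not_ge hj
    have hTK : T ℝ m = T ℝ (K:ℤ) := by rw [hKdef, T_natAbs]
    rw [hTK]
    have hdeg : (T ℝ (K:ℤ)).natDegree ≤ K := T_natDegree_le K
    rw [aeval_eq_sum_range]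
    rw [ContinuousLinearMap.sum_apply, inner_sum]
    refine Finset.sum_eq_zero (fun i hi => ?_)
    rw [Finset.mem_range] at hi
    have hiK : i ≤ K := by omega
    rw [ContinuousLinearMap.smul_apply, inner_smul_right, hδinner, hAk]
    have hzero : μn i g = 0 := by
      by_contra hne
      have := hsupport i g hne
      have : (i:ℝ) ≤ (K:ℝ) := by exact_mod_cast hiK
      linarith [hsupport i g hne]
    rw [hzero]
    ring
  -- combine everything
  have hd0 : (0:ℝ) ≤ dist g 1 := dist_nonneg
  have hsum_le : ∑ j ∈ Finset.range (n+1), ((n.choose j : ℝ)/2^n) * t j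
      ≤ ∑ j ∈ (Finset.range (n+1)).filter (fun j : ℕ => dist g 1 ≤ |(n:ℝ) - 2*(j:ℝ)|),
        (n.choose j : ℝ)/2^n := by
    rw [← Finset.sum_filter_of_ne (p := fun j : ℕ => dist g 1 ≤ |(n:ℝ) - 2*(j:ℝ)|)
      (fun x _ hx => by
        by_contra hcon
        exact hx (by rw [htv x hcon, mul_zero]))]
    refine Finset.sum_le_sum (fun j hj => ?_)
    have h1 : t j ≤ 1 := le_trans (le_abs_self _) (htb j)
    have h2 : (0:ℝ) ≤ (n.choose j : ℝ)/2^n := by positivity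
    calc ((n.choose j : ℝ)/2^n) * t j ≤ ((n.choose j : ℝ)/2^n) * 1 :=
          mul_le_mul_of_nonneg_left h1 h2
      _ = (n.choose j : ℝ)/2^n := mul_one _
  have hcher := chernoff n hn (dist g 1) hd0 hg
  calc μn n g = ‖P‖^n * ∑ j ∈ Finset.range (n+1), ((n.choose j : ℝ)/2^n) * t j := hdecomp
    _ ≤ ‖P‖^n * (2 * Real.exp (-((n:ℝ)/2) * ((1 + dist g 1/n) * Real.log (1 + dist g 1/n) +
        (1 - dist g 1/n) * Real.log (1 - dist g 1/n)))) := by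
        refine mul_le_mul_of_nonneg_left (le_trans hsum_le hcher) (by positivity)
    _ = 2 * ‖P‖ ^ n * Real.exp (-((n : ℝ) / 2) *
      ((1 + dist g 1 / n) * Real.log (1 + dist g 1 / n) +
        (1 - dist g 1 / n) * Real.log (1 - dist g 1 / n))) := by ring
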